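/- If a semialgebraic set W ⊆ ℝ^N has positive measure under the standard Gaussian measure, then W has nonempty interior. -/

import Mathlib

open Set MeasureTheory ProbabilityTheory MvPolynomial

/-- A basic semialgebraic subset of `ℝ^ι`: solutions of one polynomial equation
together with finitely many strict polynomial inequalities. -/
def IsBasicSemialgebraic {ι : Type} [Fintype ι] (s : Set (ι → ℝ)) : Prop :=
  ∃ (p : MvPolynomial ι ℝ) (Q : Finset (MvPolynomial ι ℝ)),
    s = {x | eval x p = 0 ∧ ∀ q ∈ Q, 0 < eval x q}

/-- A semialgebraic set: a finite union of basic semialgebraic sets. -/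
def IsSemialgebraic {ι : Type} [Fintype ι] (W : Set (ι → ℝ)) : Prop :=
  ∃ (k : ℕ) (f : Fin k → Set (ι → ℝ)),
    (∀ i, IsBasicSemialgebraic (f i)) ∧ W = ⋃ i, f i

/-- The zero set of a nonzero multivariate polynomial is Gaussian-null. -/
lemma null_zero_set : ∀ (n : ℕ) (p : MvPolynomial (Fin n) ℝ), p ≠ 0 →
    Measure.pi (fun _ : Fin n => gaussianReal 0 1) {x | eval x p = 0} = 0 := by
  intro n
  induction n with
  | zero =>
    intro p hp
    obtain ⟨c, rfl⟩ := MvPolynomial.C_surjective (Fin 0) p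
    have hc : c ≠ 0 := fun h => hp (by simp [h])
    have : {x : Fin 0 → ℝ | eval x (C c) = 0} = ∅ := by
      ext x; simp [hc]
    rw [this, measure_empty]
  | succ n ih =>
    intro p hp
    set μ0 : Measure ℝ := gaussianReal 0 1
    set ν : Measure (Fin n → ℝ) := Measure.pi (fun _ => gaussianReal 0 1)
    set q : Polynomial (MvPolynomial (Fin n) ℝ) := finSuccEquiv ℝ n p with hq
    have hq0 : q ≠ 0 := by
      simpa [hq] using (map_ne_zero_iff _ (finSuccEquiv ℝ n).injective).mpr hp
    obtain ⟨k, hk⟩ : ∃ k, q.coeff k ≠ 0 := by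
      by_contra h
      push_neg at h
      exact hq0 (Polynomial.ext fun k => by simp [h k])
    -- the "slab" in product form
    set T : Set ((Fin n → ℝ) × ℝ) := {z | eval (Fin.cons z.2 z.1) p = 0} with hT
    have hcons : Continuous fun z : (Fin n → ℝ) × ℝ => (Fin.cons z.2 z.1 : Fin (n+1) → ℝ) := by
      apply continuous_pi
      intro i
      refine Fin.cases ?_ ?_ i
      · simpa using continuous_snd
      · intro j
        simpa using (continuous_apply j).comp' continuous_fst
    have hTmeas : MeasurableSet T := by
      have : Continuous fun z : (Fin n → ℝ) × ℝ => eval (Fin.cons z.2 z.1) p :=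
        (MvPolynomial.continuous_eval (p := p)).comp hcons
      exact (isClosed_eq this continuous_const).measurableSet
    have hTnull : (ν.prod μ0) T = 0 := by
      rw [Measure.measure_prod_null hTmeas]
      have hcnull : ν {x | eval x (q.coeff k) = 0} = 0 := ih _ hk
      filter_upwards [compl_mem_ae_iff.mpr hcnull] with x hx
      have hx' : eval x (q.coeff k) ≠ 0 := hx
      set qx : Polynomial ℝ := q.map (eval x) with hqx
      have hqx0 : qx ≠ 0 := by
        intro h
        apply hx'
        have := congrArg (fun r => Polynomial.coeff r k) h
        simpa [hqx] using this
      have hslice : (Prod.mk x ⁻¹' T) = {y | Polynomial.eval y qx = 0} := by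
        ext y
        simp only [hT, mem_preimage, mem_setOf_eq, hqx]
        rw [eval_eq_eval_mv_eval']
      rw [hslice]
      have hfin : Set.Finite {y | Polynomial.eval y qx = 0} :=
        Polynomial.finite_setOf_isRoot hqx0
      exact gaussianReal_absolutelyContinuous 0 one_ne_zero (hfin.measure_zero _)
    -- transfer via measure preserving equivalence
    have h1 := MeasureTheory.measurePreserving_piFinSuccAbove
      (fun _ : Fin (n+1) => gaussianReal 0 1) 0
    have h2 : MeasurePreserving (Prod.swap : ℝ × (Fin n → ℝ) → (Fin n → ℝ) × ℝ)
        (μ0.prod ν) (ν.prod μ0) := Measure.measurePreserving_swap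
    have h : MeasurePreserving
        (fun v : Fin (n+1) → ℝ => Prod.swap ((MeasurableEquiv.piFinSuccAbove (fun _ => ℝ) 0) v))
        (Measure.pi (fun _ : Fin (n+1) => gaussianReal 0 1)) (ν.prod μ0) := h2.comp h1
    have hS : {x : Fin (n+1) → ℝ | eval x p = 0} =
        (fun v : Fin (n+1) → ℝ =>
          Prod.swap ((MeasurableEquiv.piFinSuccAbove (fun _ => ℝ) 0) v)) ⁻¹' T := by
      ext v
      have hv : ((MeasurableEquiv.piFinSuccAbove (fun _ : Fin (n+1) => ℝ) 0) v)
          = (v 0, Fin.tail v) := by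
        simp [MeasurableEquiv.piFinSuccAbove, Fin.consEquiv]
      simp [hT, hv, Prod.swap, Fin.cons_self_tail]
    rw [hS, ← Measure.map_apply h.measurable hTmeas, h.map_eq]
    exact hTnull

/-- If a semialgebraic set `W ⊆ ℝᴺ` has positive measure under the standard
Gaussian measure, then `W` has nonempty interior. -/
theorem stmt9 {N : ℕ} (W : Set (Fin N → ℝ)) (hW : IsSemialgebraic W)
    (hpos : 0 < Measure.pi (fun _ : Fin N => gaussianReal 0 1) W) :
    (interior W).Nonempty := by
  obtain ⟨k, f, hf, rfl⟩ := hW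
  set μ := Measure.pi (fun _ : Fin N => gaussianReal 0 1) with hμ
  obtain ⟨i, hi⟩ : ∃ i, μ (f i) ≠ 0 := by
    by_contra h
    push_neg at h
    have : μ (⋃ i, f i) = 0 := measure_iUnion_null h
    simp [this] at hpos
  obtain ⟨p, Q, hfi⟩ := hf i
  rcases eq_or_ne p 0 with rfl | hp
  · have hopen : IsOpen (f i) := by
      rw [hfi]
      have : {x : Fin N → ℝ | eval x (0 : MvPolynomial (Fin N) ℝ) = 0 ∧ ∀ q ∈ Q, 0 < eval x q}
          = ⋂ q ∈ Q, {x | 0 < eval x q} := by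
        ext x; simp
      rw [this]
      exact isOpen_biInter_finset fun q _ =>
        isOpen_lt continuous_const (MvPolynomial.continuous_eval (p := q))
    obtain ⟨x, hx⟩ := nonempty_of_measure_ne_zero hi
    exact ⟨x, interior_maximal (subset_iUnion f i) hopen hx⟩
  · exfalso
    apply hi
    apply measure_mono_null _ (null_zero_set N p hp)
    rw [hfi]
    exact fun x hx => hx.1
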